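/- Suppose a twice differentiable function V satisfies (μa(x)/2)V'(x) - (δ + M)V'(x) - γV(x) + M = 0 with V''(x) = -μV'(x)/(σ²a(x)) and V'(x) > 0 on an interval, for a differentiable positive function a. Then a satisfies a(x)a'(x) = (a(x) - c̃)(μ² + 2σ²γ)/(μσ²), where c̃ = 2μ(δ+M)/(μ² + 2σ²γ). -/

import Mathlib

open Real

/-- If `V` satisfies `(μ a(x)/2) V'(x) - (δ+M) V'(x) - γ V(x) + M = 0`
together with `V''(x) = -μ V'(x)/(σ² a(x))` and `V'(x) > 0` on an open interval `I`,
for a differentiable positive function `a`, then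
`a(x) a'(x) = (a(x) - c̃) (μ² + 2σ²γ)/(μσ²)` on `I`, where
`c̃ = 2μ(δ+M)/(μ² + 2σ²γ)`. -/
theorem stmt_5 (μ σ γ M δ : ℝ) (hμ : 0 < μ) (hσ : 0 < σ) (hγ : 0 < γ)
    (hM : 0 < M) (hδ : 0 ≤ δ)
    (I : Set ℝ) (hI : IsOpen I)
    (V a : ℝ → ℝ)
    (hVdiff : ∀ x ∈ I, DifferentiableAt ℝ V x)
    (hV'diff : ∀ x ∈ I, DifferentiableAt ℝ (deriv V) x)
    (hadiff : ∀ x ∈ I, DifferentiableAt ℝ a x)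
    (hapos : ∀ x ∈ I, 0 < a x)
    (hV'pos : ∀ x ∈ I, 0 < deriv V x)
    (hODE : ∀ x ∈ I,
      (μ * a x / 2) * deriv V x - (δ + M) * deriv V x - γ * V x + M = 0)
    (hV'' : ∀ x ∈ I, deriv (deriv V) x = -μ * deriv V x / (σ ^ 2 * a x)) :
    ∀ x ∈ I,
      a x * deriv a x
        = (a x - 2 * μ * (δ + M) / (μ ^ 2 + 2 * σ ^ 2 * γ))
            * (μ ^ 2 + 2 * σ ^ 2 * γ) / (μ * σ ^ 2) := by
  intro x hx
  set g : ℝ → ℝ := fun y =>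
    (μ * a y / 2) * deriv V y - (δ + M) * deriv V y - γ * V y + M with hg
  have h1 : HasDerivAt (fun y => μ * a y / 2) (μ * deriv a x / 2) x :=
    (((hadiff x hx).hasDerivAt.const_mul μ).div_const 2)
  have h2 : HasDerivAt (deriv V) (deriv (deriv V) x) x := (hV'diff x hx).hasDerivAt
  have h3 : HasDerivAt V (deriv V x) x := (hVdiff x hx).hasDerivAt
  have hgD : HasDerivAt g
      ((μ * deriv a x / 2) * deriv V x + (μ * a x / 2) * deriv (deriv V) x
        - (δ + M) * deriv (deriv V) x - γ * deriv V x) x := by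
    exact (((h1.mul h2).sub (h2.const_mul (δ + M))).sub (h3.const_mul γ)).add_const M
  have hzero : g =ᶠ[nhds x] (fun _ => (0 : ℝ)) := by
    filter_upwards [hI.mem_nhds hx] with y hy using hODE y hy
  have hderiv0 : deriv g x = 0 := by
    rw [Filter.EventuallyEq.deriv_eq hzero, deriv_const]
  have key : (μ * deriv a x / 2) * deriv V x + (μ * a x / 2) * deriv (deriv V) x
        - (δ + M) * deriv (deriv V) x - γ * deriv V x = 0 := by
    rw [← hgD.deriv, hderiv0]
  rw [hV'' x hx] at key
  have ha : a x ≠ 0 := (hapos x hx).ne'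
  have hσ2 : σ ^ 2 ≠ 0 := pow_ne_zero 2 hσ.ne'
  have hV' : deriv V x ≠ 0 := (hV'pos x hx).ne'
  have hμγ : μ ^ 2 + 2 * σ ^ 2 * γ ≠ 0 := by positivity
  field_simp at key
  have hfac : (2 * σ ^ 2 * a x * deriv V x) *
      (σ ^ 2 * a x * μ * deriv a x - a x * μ ^ 2 - 2 * σ ^ 2 * a x * γ
        + 2 * μ * (δ + M)) = 0 := by linear_combination (2 * σ ^ 2 * a x) * key
  have hne : (2 * σ ^ 2 * a x * deriv V x) ≠ 0 := by positivity
  have hL := (mul_eq_zero.mp hfac).resolve_left hne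
  have hrhs : (a x - 2 * μ * (δ + M) / (μ ^ 2 + 2 * σ ^ 2 * γ))
      * (μ ^ 2 + 2 * σ ^ 2 * γ) / (μ * σ ^ 2)
      = (a x * (μ ^ 2 + 2 * σ ^ 2 * γ) - 2 * μ * (δ + M)) / (μ * σ ^ 2) := by
    rw [sub_mul, div_mul_cancel₀ _ hμγ]
  rw [hrhs, eq_div_iff (by positivity : μ * σ ^ 2 ≠ 0)]
  linear_combination hL
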